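/- arXiv:math/9903181 — 2 statements merged into one kernel-verified Lean document; each statement's English description precedes it below -/
import Mathlib

section
/- For every raiz θ ∈ R⁺(n), the polynomial P_n satisfies: Ẽ(θ)(P_n) = 1 if dim θ = α_n (i.e. θ has length n), and Ẽ(θ)(P_n) = 0 otherwise. -/
/-!
Common setup: raiz for the cyclic quiver `Ã_{n-1}`, the polynomial algebra
`N = ℚ[x_θ : θ ∈ R⁺(n)]`, and the locally finite differential operators
`E(θ)`, `Ẽ(θ)`, `B(θ)`, `𝔅_i`, `𝔈_i`, `Δ_i`, and the Chevalley operators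
`e_i^T`, `h_i^T`, `f_i^T`, following Finkelberg–Kuznetsov.
-/

open MvPolynomial

/-- A raiz for the cyclic quiver with `n` vertices: a pair `(p,q)` of integers with
`p ≤ q`, modulo simultaneous translation of both entries by `n`; it is faithfully
encoded by the ending class `q mod n : ZMod n` together with the (positive) length
`q - p + 1 : ℕ+`. -/
abbrev Raiz (n : ℕ) : Type := ZMod n × ℕ+

namespace Raiz

variable {n : ℕ}

/-- The class at which a raiz begins: for `(p,q)` this is `p mod n = (q - len + 1) mod n`. -/
def beg (θ : Raiz n) : ZMod n := θ.1 - ((θ.2 : ℕ) : ZMod n) + 1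

/-- `θ = (p,q)` ends at `i` iff `q ≡ i (mod n)`. -/
def Ends (θ : Raiz n) (i : ZMod n) : Prop := θ.1 = i

/-- `θ = (p,q)` begins at `i` iff `p ≡ i (mod n)`. -/
def Begins (θ : Raiz n) (i : ZMod n) : Prop := beg θ = i

/-- The simple raiz `(i,i)`. -/
def simple (i : ZMod n) : Raiz n := (i, 1)

/-- The concatenation `ϑ⌣θ`: it is defined (`some`) exactly when `θ` begins at the
class following the class at which `ϑ` ends; for `ϑ = (a,b)` ending at `i-1` and
`θ = (p,q)` beginning at `i` it is `(a, b+q-p+1)`, i.e. it ends where `θ` ends and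
its length is the sum of the lengths. -/
def cat (ϑ θ : Raiz n) : Option (Raiz n) :=
  if beg θ = ϑ.1 + 1 then some (θ.1, ϑ.2 + θ.2) else none

/-- `dimAt θ j` is the number of integers in `[p,q]` congruent to `j` mod `n`:
the dimension vector `dim θ ∈ ℕ^{ℤ/nℤ}` of the raiz `θ`. -/
def dimAt (θ : Raiz n) (j : ZMod n) : ℕ :=
  ((Finset.range (θ.2 : ℕ)).filter (fun t => θ.1 - ((t : ℕ) : ZMod n) = j)).card

end Raiz

/-- The polynomial algebra `N = ℚ[x_θ : θ ∈ R⁺(n)]`. -/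
abbrev Pol (n : ℕ) := MvPolynomial (Raiz n) ℚ

/-- Operators on `N`. -/
abbrev Op (n : ℕ) := Pol n → Pol n

noncomputable section

/-- The locally finite differential operator `Σ_η c(η)·∂/∂x_η`: applied to a
polynomial `P` only the (finitely many) variables occurring in `P` contribute,
since `∂P/∂x_η = 0` for `η ∉ vars P`. -/
def diffOp {n : ℕ} (c : Raiz n → Pol n) : Op n :=
  fun P => ∑ η ∈ P.vars, c η * pderiv η P

/-- `Ẽ(θ) = Σ_{ϑ ∈ E_{i-1}} x_ϑ ∂/∂x_{ϑ⌣θ}` for a raiz `θ` beginning at `i`: the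
term `ϑ = 0` contributes `∂/∂x_θ` (as `x_0 = 1` and `0⌣θ = θ`), and a nonzero `ϑ`
ending at `i-1` contributes at the variable `η = ϑ⌣θ`, i.e. at `η` with the same
end as `θ` and `len η > len θ`, with coefficient `x_ϑ`, where
`ϑ = (beg θ - 1, len η - len θ)`. -/
def Etil {n : ℕ} (θ : Raiz n) : Op n :=
  diffOp (fun η =>
    if η = θ then 1
    else if η.1 = θ.1 ∧ θ.2 < η.2 then X ((Raiz.beg θ - 1, η.2 - θ.2) : Raiz n) else 0)

/-- `E(θ) = Σ_{ϑ ∈ E_{i-1}} x_{ϑ⌣θ} ∂/∂x_ϑ` for a raiz `θ` beginning at `i`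
(the `ϑ = 0` term vanishes since `∂/∂x_0 = 0`). -/
def Eop {n : ℕ} (θ : Raiz n) : Op n :=
  diffOp (fun ϑ => if ϑ.1 = Raiz.beg θ - 1 then X ((θ.1, ϑ.2 + θ.2) : Raiz n) else 0)

/-- `B(θ) = Σ_{ϑ ∈ B_{i+1}} x_{θ⌣ϑ} ∂/∂x_ϑ` for a raiz `θ` ending at `i`
(the `ϑ = 0` term vanishes since `∂/∂x_0 = 0`). -/
def Bop {n : ℕ} (θ : Raiz n) : Op n :=
  diffOp (fun ϑ => if Raiz.beg ϑ = θ.1 + 1 then X ((ϑ.1, θ.2 + ϑ.2) : Raiz n) else 0)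

/-- `𝔅_i = Σ_{0 ≠ θ ∈ B_{i+1}} x_θ ∂/∂x_θ`. -/
def Bfrak {n : ℕ} (i : ZMod n) : Op n :=
  diffOp (fun θ => if Raiz.beg θ = i + 1 then X θ else 0)

/-- `𝔈_i = Σ_{0 ≠ θ ∈ E_{i-1}} x_θ ∂/∂x_θ`. -/
def Efrak {n : ℕ} (i : ZMod n) : Op n :=
  diffOp (fun θ => if θ.1 = i - 1 then X θ else 0)

/-- The commutator `[f,g] = f∘g - g∘f` of two operators. -/
def brak {n : ℕ} (f g : Op n) : Op n := fun P => f (g P) - g (f P)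

/-- Multiplication by `x_θ` as an operator on `N`. -/
def mulX {n : ℕ} (θ : Raiz n) : Op n := fun P => X θ * P

/-- Extend a raiz-indexed family of operators to `Option (Raiz n)`: a term with
an undefined concatenation is declared to be `0`. -/
def opt {n : ℕ} (F : Raiz n → Op n) : Option (Raiz n) → Op n
  | none => 0
  | some θ => F θ

/-- `Δ_i = 𝔅_{i-1} - 𝔅_i + c_i`, for a fixed family of constants `c`. -/
def Delta {n : ℕ} (c : ZMod n → ℚ) (i : ZMod n) : Op n :=
  fun P => Bfrak (i - 1) P - Bfrak i P + c i • P

/-- The Chevalley operator `e_i^T = Ẽ(i)`. -/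
def eT {n : ℕ} (i : ZMod n) : Op n := Etil (Raiz.simple i)

/-- The Chevalley operator `h_i^T = 𝔈_{i+1} - 𝔈_i + Δ_i`. -/
def hT {n : ℕ} (c : ZMod n → ℚ) (i : ZMod n) : Op n :=
  fun P => Efrak (i + 1) P - Efrak i P + Delta c i P

/-- The Chevalley operator `f_i^T = B(i) - E(i) + x_i·Δ_i`. -/
def fT {n : ℕ} (c : ZMod n → ℚ) (i : ZMod n) : Op n :=
  fun P => Bop (Raiz.simple i) P - Eop (Raiz.simple i) P + X (Raiz.simple i) * Delta c i P

/-- The affine Cartan matrix of type `Ã_{n-1}` (for `n ≥ 2`): `a_ii = 2`;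
`a_ij = -1` if `j = i±1` and `n ≠ 2`; `a_ij = -2` if `n = 2` and `j = i+1 ≠ i`;
`a_ij = 0` otherwise. -/
def cartan (n : ℕ) (i j : ZMod n) : ℤ :=
  if j = i then 2
  else if n = 2 then -2
  else if j = i + 1 ∨ j = i - 1 then -1
  else 0

/-- The projection `ζ : R⁺(m) → R⁺(n)` for `n ∣ m`: the class of `(p,q)` modulo `m`
is sent to its class modulo `n`. -/
def Raiz.zetaR {n m : ℕ} (h : n ∣ m) : Raiz m → Raiz n :=
  fun θ => (ZMod.castHom h (ZMod n) θ.1, θ.2)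

/-- The induced `ℚ`-algebra homomorphism `ζ : ℚ[x_ϑ : ϑ ∈ R⁺(m)] → ℚ[x_θ : θ ∈ R⁺(n)]`,
`x_ϑ ↦ x_{ζ(ϑ)}`. -/
def zeta {n m : ℕ} (h : n ∣ m) : Pol m →ₐ[ℚ] Pol n :=
  MvPolynomial.rename (Raiz.zetaR h)

/-- The natural-number representatives in `[0, m)` of the residues `≡ i (mod n)`:
for `n ∣ m` these enumerate (via `ℕ → ZMod m`) exactly the classes `j ∈ ℤ/mℤ` with
`j ≡ i (mod n)`. -/
def fiber (n m : ℕ) (i : ZMod n) : Finset ℕ :=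
  (Finset.range m).filter (fun t => ((t : ZMod n) = i))

/-- All raiz of level `n` with length at most `m`. -/
def raizUpTo (n m : ℕ) : Finset (Raiz n) :=
  ((Finset.range n).image (fun a : ℕ => ((a : ZMod n)))) ×ˢ
    ((Finset.range m).image (fun l : ℕ => (⟨l + 1, Nat.succ_pos l⟩ : ℕ+)))

open Classical in
/-- Kostant partitions of the dimension vector `γ`, as multisets `κ` of raiz with
`Σ_{θ ∈ κ} dim θ = γ`; the parameter `m` bounds the lengths of parts and the
multiplicities, so for `Σ_j γ(j) ≤ m` this is the set of all Kostant partitions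
of `γ`. -/
def kostant (n : ℕ) (γ : ZMod n → ℕ) (m : ℕ) : Finset (Multiset (Raiz n)) :=
  ((m • (raizUpTo n m).val).powerset.toFinset).filter
    (fun κ => ∀ j, (κ.map (fun θ => θ.dimAt j)).sum = γ j)

/-- The monomial `x^κ` attached to a Kostant partition `κ`. -/
def xPow {n : ℕ} (κ : Multiset (Raiz n)) : Pol n :=
  (κ.map (fun θ => (X θ : Pol n))).prod

/-- `P_n = Σ_{κ ∈ 𝔎(α_n)} (-1)^{K(κ)+1} x^κ`: the sum is over all Kostant partitions
of the all-ones dimension vector `α_n` (all of whose parts have length `≤ n` and which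
have at most `n` parts). -/
def Ppoly (n : ℕ) : Pol n :=
  ∑ κ ∈ kostant n (fun _ => 1) n, ((-1 : ℚ) ^ (Multiset.card κ + 1)) • xPow κ

open Classical in
/-- `a_p = Σ_{θ : dim θ = p·α_n} Ẽ(θ)` for `p ≥ 1` (a finite sum: such `θ` have
length `p·n`). -/
def aPos (n p : ℕ) : Op n :=
  fun P => ∑ θ ∈ (raizUpTo n (p * n)).filter (fun θ => ∀ j, θ.dimAt j = p), Etil θ P

/-- `a_{-p}`: `c₀` times the operator of multiplication by `ζ(P_{pn})`, for `p ≥ 1`. -/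
def aNeg (n : ℕ) (c₀ : ℚ) (p : ℕ) : Op n :=
  fun P => c₀ • (zeta (dvd_mul_left n p) (Ppoly (p * n)) * P)

end


open Classical

namespace EtilAux

variable {n : ℕ}

/-- Counting function: number of `t < L` with `e - t = j` in `ZMod n`. -/
def dAt (e : ZMod n) (L : ℕ) (j : ZMod n) : ℕ :=
  ((Finset.range L).filter (fun t => e - ((t : ℕ) : ZMod n) = j)).card

lemma dimAt_eq_dAt (θ : Raiz n) (j : ZMod n) : θ.dimAt j = dAt θ.1 (θ.2 : ℕ) j := rfl

lemma dAt_succ (e : ZMod n) (L : ℕ) (j : ZMod n) :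
    dAt e (L + 1) j = dAt e L j + (if e - ((L : ℕ) : ZMod n) = j then 1 else 0) := by
  unfold dAt
  rw [Finset.range_add_one, Finset.filter_insert]
  split
  · rw [Finset.card_insert_of_notMem (by simp)]
  · simp

lemma dAt_add (e : ZMod n) (A B : ℕ) (j : ZMod n) :
    dAt e (A + B) j = dAt e A j + dAt (e - (A : ZMod n)) B j := by
  induction B with
  | zero => simp [dAt]
  | succ B ih =>
      rw [← Nat.add_assoc, dAt_succ, ih, dAt_succ]
      have : e - ((A + B : ℕ) : ZMod n) = e - (A : ZMod n) - ((B : ℕ) : ZMod n) := by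
        push_cast; ring
      rw [this, Nat.add_assoc]

lemma dAt_pos_self (e : ZMod n) {L : ℕ} (hL : 0 < L) : 0 < dAt e L e := by
  apply Finset.card_pos.2
  exact ⟨0, by simp [hL]⟩

lemma dAt_cover_next {e j : ZMod n} {L : ℕ} (hne : e ≠ j) (h : 0 < dAt e L j) :
    0 < dAt e L (j + 1) := by
  obtain ⟨t, ht⟩ := Finset.card_pos.1 h
  simp only [Finset.mem_filter, Finset.mem_range] at ht
  obtain ⟨htL, hte⟩ := ht
  have ht0 : t ≠ 0 := by rintro rfl; simp at hte; exact hne hte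
  apply Finset.card_pos.2
  refine ⟨t - 1, ?_⟩
  simp only [Finset.mem_filter, Finset.mem_range]
  constructor
  · omega
  · have : ((t - 1 : ℕ) : ZMod n) = (t : ZMod n) - 1 := by
      have : t = (t-1) + 1 := by omega
      rw [this]; push_cast; ring
    rw [this, ← hte]; ring

end EtilAux

namespace EtilAux

variable {n : ℕ}

lemma sum_dAt [NeZero n] (e : ZMod n) (L : ℕ) : ∑ j : ZMod n, dAt e L j = L := by
  induction L with
  | zero => simp [dAt]
  | succ L ih =>
      have : ∀ j : ZMod n, dAt e (L+1) j = dAt e L j + (if e - ((L:ℕ):ZMod n) = j then 1 else 0) :=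
        fun j => dAt_succ e L j
      simp only [this, Finset.sum_add_distrib, ih, Finset.sum_ite_eq, Finset.mem_univ, if_true]

lemma dAt_ge_one [NeZero n] (e j : ZMod n) {L : ℕ} (hL : n ≤ L) : 1 ≤ dAt e L j := by
  apply Finset.card_pos.2
  refine ⟨(e - j).val, ?_⟩
  simp only [Finset.mem_filter, Finset.mem_range]
  exact ⟨lt_of_lt_of_le (ZMod.val_lt _) hL, by rw [ZMod.natCast_rightInverse (e - j)]; ring⟩

lemma dAt_n_eq_one [NeZero n] (e j : ZMod n) : dAt e n j = 1 := by
  have hsum : ∑ j' : ZMod n, dAt e n j' = n := sum_dAt e n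
  by_contra h
  have h2 : 2 ≤ dAt e n j := lt_of_le_of_ne (dAt_ge_one e j le_rfl) (Ne.symm h)
  have : n + 1 ≤ ∑ j' : ZMod n, dAt e n j' := by
    calc n + 1 = (∑ _j' : ZMod n, 1) + 1 := by simp [ZMod.card]
    _ ≤ ∑ j' : ZMod n, dAt e n j' := by
        rw [← Finset.sum_erase_add _ _ (Finset.mem_univ j),
          ← Finset.sum_erase_add (M := ℕ) _ _ (Finset.mem_univ j)]
        have h1 : (∑ _j' ∈ Finset.univ.erase j, 1) ≤ ∑ j' ∈ Finset.univ.erase j, dAt e n j' :=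
          Finset.sum_le_sum (fun j' _ => dAt_ge_one e j' le_rfl)
        omega
  omega

/-- The class just before the beginning is not covered, when `L < n`. -/
lemma dAt_before_beg [NeZero n] (e : ZMod n) {L : ℕ} (hL : L < n) :
    dAt e L (e - (L : ZMod n)) = 0 := by
  unfold dAt
  rw [Finset.card_eq_zero, Finset.filter_eq_empty_iff]
  intro t ht
  rw [Finset.mem_range] at ht
  intro hte
  have : ((L - t : ℕ) : ZMod n) = 0 := by
    have hc : (L:ZMod n) = (t:ZMod n) := by linear_combination hte
    push_cast [Nat.cast_sub (le_of_lt ht)]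
    rw [hc]; ring
  rw [ZMod.natCast_eq_zero_iff] at this
  have := Nat.le_of_dvd (by omega) this
  omega

/-- The beginning class is covered, for `L ≥ 1`. -/
lemma dAt_beg [NeZero n] (e : ZMod n) {L : ℕ} (hL : 0 < L) :
    0 < dAt e L (e - (L : ZMod n) + 1) := by
  apply Finset.card_pos.2
  refine ⟨L - 1, ?_⟩
  simp only [Finset.mem_filter, Finset.mem_range]
  refine ⟨by omega, ?_⟩
  have : ((L - 1 : ℕ) : ZMod n) = (L : ZMod n) - 1 := by
    have h : L = (L-1)+1 := by omega
    rw [h]; push_cast; ring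
  rw [this]; ring

end EtilAux

namespace EtilAux

variable {n : ℕ}

/-- Total dimension of a multiset of raiz at class `j`. -/
def dsum (κ : Multiset (Raiz n)) (j : ZMod n) : ℕ :=
  (κ.map (fun ϑ => ϑ.dimAt j)).sum

lemma dsum_cons (a : Raiz n) (κ : Multiset (Raiz n)) (j : ZMod n) :
    dsum (a ::ₘ κ) j = a.dimAt j + dsum κ j := by simp [dsum]

lemma le_map_sum {α : Type*} {s : Multiset α} {f : α → ℕ} {a : α} (h : a ∈ s) :
    f a ≤ (s.map f).sum := by
  rw [← Multiset.cons_erase h, Multiset.map_cons, Multiset.sum_cons]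
  exact Nat.le_add_right _ _

lemma dimAt_le_dsum {κ : Multiset (Raiz n)} {a : Raiz n} (h : a ∈ κ) (j : ZMod n) :
    a.dimAt j ≤ dsum κ j := le_map_sum (f := fun ϑ => ϑ.dimAt j) h

lemma sum_dsum [NeZero n] (κ : Multiset (Raiz n)) :
    ∑ j : ZMod n, dsum κ j = (κ.map (fun ϑ => ((ϑ.2 : ℕ)))).sum := by
  induction κ using Multiset.induction_on with
  | empty => simp [dsum]
  | cons a s ih =>
      simp only [dsum_cons, Finset.sum_add_distrib, ih, Multiset.map_cons, Multiset.sum_cons]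
      congr 1
      rw [← sum_dAt a.1 (a.2 : ℕ)]
      rfl

lemma dimAt_pos_end (a : Raiz n) : 0 < a.dimAt a.1 := dAt_pos_self a.1 a.2.pos

section Kostant
variable [NeZero n]

/-- Characterization of membership in `kostant n 1 n`. -/
lemma mem_kostant_iff {κ : Multiset (Raiz n)} :
    κ ∈ kostant n (fun _ => 1) n ↔ ∀ j : ZMod n, dsum κ j = 1 := by
  constructor
  · intro h
    simp only [kostant, Finset.mem_filter] at h
    exact h.2
  · intro h
    simp only [kostant, Finset.mem_filter, Multiset.mem_toFinset, Multiset.mem_powerset]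
    refine ⟨?_, h⟩
    -- total length is n, so each part has length ≤ n
    have hlen : (κ.map (fun ϑ => ((ϑ.2 : ℕ)))).sum = n := by
      rw [← sum_dsum]; simp [h, ZMod.card]
    have hnodup : κ.Nodup := by
      rw [Multiset.nodup_iff_count_le_one]
      intro a
      by_contra hc
      push_neg at hc
      have ha : a ∈ κ := by
        rw [← Multiset.count_pos]; omega
      have ha2 : a ∈ κ.erase a := by
        rw [← Multiset.count_pos, Multiset.count_erase_self]; omega
      have : 2 ≤ dsum κ a.1 := by
        have h1 : a.dimAt a.1 + dsum (κ.erase a) a.1 = dsum κ a.1 := by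
          rw [← dsum_cons, Multiset.cons_erase ha]
        have h2 := dimAt_le_dsum ha2 a.1
        have h3 := dimAt_pos_end a
        omega
      rw [h a.1] at this; omega
    rw [Multiset.le_iff_count]
    intro a
    by_cases haκ : a ∈ κ
    · have hc1 : Multiset.count a κ ≤ 1 := Multiset.nodup_iff_count_le_one.1 hnodup a
      have h4 : (a.2 : ℕ) ≤ n := by
        have := le_map_sum (f := fun ϑ => ((ϑ.2 : ℕ))) haκ
        omega
      have haR : a ∈ raizUpTo n n := by
        refine Finset.mem_product.2 ⟨?_, ?_⟩ <;> simp only [Finset.mem_image, Finset.mem_range]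
        · exact ⟨a.1.val, ZMod.val_lt a.1, ZMod.natCast_rightInverse a.1⟩
        · refine ⟨(a.2 : ℕ) - 1, by have := a.2.pos; omega, ?_⟩
          have := a.2.pos
          ext
          show (a.2 : ℕ) - 1 + 1 = (a.2 : ℕ)
          omega
      rw [Multiset.count_nsmul]
      have hval : 0 < Multiset.count a (raizUpTo n n).val := Multiset.count_pos.2 haR
      have hn1 : 1 ≤ n := Nat.pos_of_ne_zero (NeZero.ne n)
      calc Multiset.count a κ ≤ 1 := hc1
      _ = 1 * 1 := (Nat.mul_one 1).symm
      _ ≤ n * Multiset.count a (raizUpTo n n).val := Nat.mul_le_mul hn1 hval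
    · simp [Multiset.count_eq_zero_of_notMem haκ]

end Kostant

end EtilAux

namespace EtilAux

variable {n : ℕ}

lemma nodup_of_dsum {κ : Multiset (Raiz n)} (h : ∀ j : ZMod n, dsum κ j = 1) : κ.Nodup := by
  rw [Multiset.nodup_iff_count_le_one]
  intro a
  by_contra hc
  push_neg at hc
  have ha : a ∈ κ := by rw [← Multiset.count_pos]; omega
  have ha2 : a ∈ κ.erase a := by
    rw [← Multiset.count_pos, Multiset.count_erase_self]; omega
  have : 2 ≤ dsum κ a.1 := by
    have h1 : a.dimAt a.1 + dsum (κ.erase a) a.1 = dsum κ a.1 := by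
      rw [← dsum_cons, Multiset.cons_erase ha]
    have h2 := dimAt_le_dsum ha2 a.1
    have h3 := dimAt_pos_end a
    omega
  rw [h a.1] at this; omega

lemma sum_len_of_dsum [NeZero n] {κ : Multiset (Raiz n)} (h : ∀ j : ZMod n, dsum κ j = 1) :
    (κ.map (fun ϑ => ((ϑ.2 : ℕ)))).sum = n := by
  rw [← sum_dsum]; simp [h, ZMod.card]

lemma len_le_of_dsum [NeZero n] {κ : Multiset (Raiz n)} (h : ∀ j : ZMod n, dsum κ j = 1)
    {a : Raiz n} (ha : a ∈ κ) : (a.2 : ℕ) ≤ n := by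
  have h1 := sum_len_of_dsum h
  have := le_map_sum (f := fun ϑ => ((ϑ.2 : ℕ))) ha
  omega

lemma mem_raizUpTo_of_len [NeZero n] {a : Raiz n} {m : ℕ} (h : (a.2 : ℕ) ≤ m) :
    a ∈ raizUpTo n m := by
  refine Finset.mem_product.2 ⟨?_, ?_⟩ <;> simp only [Finset.mem_image, Finset.mem_range]
  · exact ⟨a.1.val, ZMod.val_lt a.1, ZMod.natCast_rightInverse a.1⟩
  · refine ⟨(a.2 : ℕ) - 1, by have := a.2.pos; omega, ?_⟩
    have := a.2.pos
    ext
    show (a.2 : ℕ) - 1 + 1 = (a.2 : ℕ)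
    omega

lemma xPow_cons (a : Raiz n) (κ : Multiset (Raiz n)) : xPow (a ::ₘ κ) = X a * xPow κ := by
  simp [xPow]

lemma pderiv_xPow (η : Raiz n) (κ : Multiset (Raiz n)) :
    pderiv η (xPow κ) = (Multiset.count η κ : ℚ) • xPow (κ.erase η) := by
  induction κ using Multiset.induction_on with
  | empty => simp [xPow]
  | cons a κ ih =>
      rw [xPow_cons, pderiv_mul, ih]
      by_cases hae : a = η
      · subst hae
        rw [pderiv_X_self, Multiset.erase_cons_head, Multiset.count_cons_self, one_mul]
        by_cases haκ : a ∈ κ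
        · have hx : X a * xPow (κ.erase a) = xPow κ := by
            conv_rhs => rw [← Multiset.cons_erase haκ]
            rw [xPow_cons]
          rw [mul_smul_comm, hx]
          push_cast
          rw [add_smul, one_smul]
          ring
        · rw [Multiset.count_eq_zero_of_notMem haκ, Multiset.erase_of_notMem haκ]
          simp
      · rw [pderiv_X_of_ne hae, zero_mul, zero_add,
          Multiset.erase_cons_tail _ hae,
          Multiset.count_cons_of_ne (fun h => hae h.symm), xPow_cons, mul_smul_comm]

lemma vars_xPow (κ : Multiset (Raiz n)) : (xPow κ).vars ⊆ κ.toFinset := by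
  induction κ using Multiset.induction_on with
  | empty => simp [xPow]
  | cons a κ ih =>
      rw [xPow_cons]
      refine (MvPolynomial.vars_mul _ _).trans ?_
      rw [Multiset.toFinset_cons]
      rw [MvPolynomial.vars_X]
      intro x hx
      rcases Finset.mem_union.1 hx with h | h
      · rw [Finset.mem_singleton] at h; exact Finset.mem_insert.2 (Or.inl h)
      · exact Finset.mem_insert.2 (Or.inr (ih h))

lemma vars_smul_subset (c : ℚ) (p : Pol n) : (c • p).vars ⊆ p.vars := by
  rw [MvPolynomial.smul_eq_C_mul]
  refine (MvPolynomial.vars_mul _ _).trans ?_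
  simp [MvPolynomial.vars_C]

lemma vars_Ppoly [NeZero n] : (Ppoly n).vars ⊆ raizUpTo n n := by
  refine (MvPolynomial.vars_sum_subset _ _).trans ?_
  intro x hx
  rw [Finset.mem_biUnion] at hx
  obtain ⟨κ, hκ, hxκ⟩ := hx
  have h1 := vars_smul_subset ((-1 : ℚ) ^ (Multiset.card κ + 1)) (xPow κ)
  have h2 := vars_xPow κ
  have hx2 : x ∈ κ := Multiset.mem_toFinset.1 (h2 (h1 hxκ))
  exact mem_raizUpTo_of_len (len_le_of_dsum (mem_kostant_iff.1 hκ) hx2)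

/-- The coefficient function of `Ẽ(θ)`. -/
noncomputable def cE (θ η : Raiz n) : Pol n :=
  if η = θ then 1
  else if η.1 = θ.1 ∧ θ.2 < η.2 then X ((Raiz.beg θ - 1, η.2 - θ.2) : Raiz n) else 0

lemma Etil_apply (θ : Raiz n) (P : Pol n) (V : Finset (Raiz n)) (hP : P.vars ⊆ V) :
    Etil θ P = ∑ η ∈ V, cE θ η * pderiv η P := by
  rw [Etil, diffOp]
  refine Finset.sum_subset hP (fun η _ hη => ?_)
  rw [MvPolynomial.pderiv_eq_zero_of_notMem_vars hη, mul_zero]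

end EtilAux

namespace EtilAux

variable {n : ℕ}

lemma dsum_erase {κ : Multiset (Raiz n)} {a : Raiz n} (h : a ∈ κ) (j : ZMod n) :
    a.dimAt j + dsum (κ.erase a) j = dsum κ j := by
  rw [← dsum_cons, Multiset.cons_erase h]

lemma exists_end {μ : Multiset (Raiz n)} {j₀ : ZMod n} (h1 : dsum μ j₀ = 1)
    (h0 : dsum μ (j₀ + 1) = 0) : ∃ ϑ ∈ μ, ϑ.1 = j₀ := by
  have : ∃ ϑ ∈ μ, 0 < ϑ.dimAt j₀ := by
    by_contra hc
    push_neg at hc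
    have : dsum μ j₀ = 0 := by
      apply Multiset.sum_eq_zero
      intro x hx
      rw [Multiset.mem_map] at hx
      obtain ⟨ϑ, hϑ, rfl⟩ := hx
      exact Nat.le_zero.1 (hc ϑ hϑ)
    omega
  obtain ⟨ϑ, hϑ, hpos⟩ := this
  refine ⟨ϑ, hϑ, ?_⟩
  by_contra hne
  have h2 : 0 < ϑ.dimAt (j₀ + 1) := dAt_cover_next hne hpos
  have h3 := dimAt_le_dsum hϑ (j₀ + 1)
  omega

lemma end_unique {μ : Multiset (Raiz n)} {j₀ : ZMod n} (h1 : dsum μ j₀ = 1)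
    {ϑ₁ ϑ₂ : Raiz n} (m1 : ϑ₁ ∈ μ) (m2 : ϑ₂ ∈ μ) (e1 : ϑ₁.1 = j₀) (e2 : ϑ₂.1 = j₀) :
    ϑ₁ = ϑ₂ := by
  by_contra hne
  have m2' : ϑ₂ ∈ μ.erase ϑ₁ := Multiset.mem_erase_of_ne (fun h => hne h.symm) |>.2 m2
  have hd1 : 0 < ϑ₁.dimAt j₀ := e1 ▸ dimAt_pos_end ϑ₁
  have hd2 : 0 < ϑ₂.dimAt j₀ := e2 ▸ dimAt_pos_end ϑ₂
  have h2 := dimAt_le_dsum m2' j₀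
  have h3 := dsum_erase m1 j₀
  omega

lemma sign_cancel (k : ℕ) (x : Pol n) :
    ((-1 : ℚ) ^ (k + 1)) • x + ((-1 : ℚ) ^ (k + 2)) • x = 0 := by
  rw [← add_smul]
  have : (-1 : ℚ) ^ (k + 1) + (-1 : ℚ) ^ (k + 2) = 0 := by
    rw [pow_succ ((-1:ℚ)) (k+1)]; ring
  rw [this, zero_smul]

lemma pnat_sub_add {a b : ℕ+} (h : b < a) : (a - b) + b = a := by
  have h1 : ((a - b : ℕ+) : ℕ) = (a : ℕ) - (b : ℕ) := by
    rw [PNat.sub_coe, if_pos h]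
  apply PNat.coe_injective
  push_cast [h1]
  have : (b : ℕ) < (a : ℕ) := h
  omega

lemma pnat_add_sub (a b : ℕ+) : (a + b) - b = a := by
  have h : b < a + b := by
    apply PNat.lt_add_left
  have h1 : ((a + b - b : ℕ+) : ℕ) = ((a + b : ℕ+) : ℕ) - (b : ℕ) := by
    rw [PNat.sub_coe, if_pos h]
  apply PNat.coe_injective
  rw [h1]
  push_cast
  omega

lemma beg_sub_one (θ : Raiz n) : Raiz.beg θ - 1 = θ.1 - (((θ.2 : ℕ)) : ZMod n) := by
  rw [Raiz.beg]; ring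

lemma len_le_of_mem_raizUpTo {m : ℕ} {a : Raiz n} (h : a ∈ raizUpTo n m) : (a.2 : ℕ) ≤ m := by
  have h := Finset.mem_product.1 h
  simp only [Finset.mem_image, Finset.mem_range] at h
  obtain ⟨-, l, hl, he⟩ := h
  have : ((a.2 : ℕ)) = l + 1 := by rw [← he]; rfl
  omega

end EtilAux

namespace EtilAux

variable {n : ℕ}

section Core
variable [NeZero n]

lemma erase_dsum_facts {θ : Raiz n} (hlt : ((θ.2 : ℕ)) < n) {κ : Multiset (Raiz n)}
    (hκ : ∀ j, dsum κ j = 1) (hθκ : θ ∈ κ) :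
    dsum (κ.erase θ) (θ.1 - (((θ.2 : ℕ)) : ZMod n)) = 1 ∧
      dsum (κ.erase θ) (θ.1 - (((θ.2 : ℕ)) : ZMod n) + 1) = 0 := by
  have h1 : θ.dimAt (θ.1 - (((θ.2 : ℕ)) : ZMod n)) = 0 := by
    rw [dimAt_eq_dAt]; exact dAt_before_beg θ.1 hlt
  have h2 : 0 < θ.dimAt (θ.1 - (((θ.2 : ℕ)) : ZMod n) + 1) := by
    rw [dimAt_eq_dAt]; exact dAt_beg θ.1 θ.2.pos
  have e1 := dsum_erase hθκ (θ.1 - (((θ.2 : ℕ)) : ZMod n))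
  have e2 := dsum_erase hθκ (θ.1 - (((θ.2 : ℕ)) : ZMod n) + 1)
  rw [hκ] at e1 e2
  omega

lemma dimAt_concat (θ ϑ : Raiz n) (hϑ : ϑ.1 = θ.1 - (((θ.2 : ℕ)) : ZMod n)) (j : ZMod n) :
    Raiz.dimAt ((θ.1, ϑ.2 + θ.2) : Raiz n) j = θ.dimAt j + ϑ.dimAt j := by
  rw [dimAt_eq_dAt, dimAt_eq_dAt, dimAt_eq_dAt]
  show dAt θ.1 ((ϑ.2 + θ.2 : ℕ+) : ℕ) j = _
  have hc : ((ϑ.2 + θ.2 : ℕ+) : ℕ) = ((θ.2 : ℕ)) + ((ϑ.2 : ℕ)) := by push_cast; ring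
  rw [hc, dAt_add, ← hϑ]

end Core

/-- The sign-reversing involution for the proof that `Ẽ(θ)(P_n) = 0` when
`len θ < n`. -/
noncomputable def invol (θ : Raiz n) (a : Multiset (Raiz n) × Raiz n) :
    Multiset (Raiz n) × Raiz n :=
  if _h : a.2 = θ ∧ θ ∈ a.1 then
    if hex : ∃ ϑ ∈ a.1.erase θ, ϑ.1 = θ.1 - (((θ.2 : ℕ)) : ZMod n) then
      (((θ.1, hex.choose.2 + θ.2) : Raiz n) ::ₘ (a.1.erase θ).erase hex.choose,
        ((θ.1, hex.choose.2 + θ.2) : Raiz n))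
    else a
  else if _h' : a.2 ∈ a.1 ∧ a.2.1 = θ.1 ∧ θ.2 < a.2.2 then
    (θ ::ₘ ((θ.1 - (((θ.2 : ℕ)) : ZMod n), a.2.2 - θ.2) : Raiz n) ::ₘ a.1.erase a.2, θ)
  else a

/-- The summand attached to a pair `(κ, η)`. -/
noncomputable def term (θ : Raiz n) (a : Multiset (Raiz n) × Raiz n) : Pol n :=
  cE θ a.2 * (((-1 : ℚ) ^ (Multiset.card a.1 + 1) * ((Multiset.count a.2 a.1 : ℕ) : ℚ)) •
    xPow (a.1.erase a.2))

end EtilAux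

namespace EtilAux

variable {n : ℕ} [NeZero n]

lemma term_eq (θ : Raiz n) (κ : Multiset (Raiz n)) (η : Raiz n) :
    term θ (κ, η) = cE θ η * (((-1 : ℚ) ^ (Multiset.card κ + 1) *
      ((Multiset.count η κ : ℕ) : ℚ)) • xPow (κ.erase η)) := rfl

lemma invol_main {θ : Raiz n} (hlt : ((θ.2 : ℕ)) < n) {κ : Multiset (Raiz n)} {η : Raiz n}
    (hκ : ∀ j, dsum κ j = 1) (hη : ((η.2 : ℕ)) ≤ n) :
    term θ (κ, η) + term θ (invol θ (κ, η)) = 0 ∧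
    (∀ j, dsum (invol θ (κ, η)).1 j = 1) ∧
    (((invol θ (κ, η)).2.2 : ℕ)) ≤ n ∧
    invol θ (invol θ (κ, η)) = (κ, η) ∧
    (term θ (κ, η) ≠ 0 → invol θ (κ, η) ≠ (κ, η)) := by
  by_cases h1 : η = θ ∧ θ ∈ κ
  · obtain ⟨heq, hθκ⟩ := h1
    rw [heq] at hη
    rw [heq]
    obtain ⟨hd1, hd0⟩ := erase_dsum_facts hlt hκ hθκ
    have hex : ∃ ϑ ∈ κ.erase θ, ϑ.1 = θ.1 - (((θ.2 : ℕ)) : ZMod n) := exists_end hd1 hd0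
    have hinv : invol θ (κ, θ) =
        (((θ.1, hex.choose.2 + θ.2) : Raiz n) ::ₘ (κ.erase θ).erase hex.choose,
          ((θ.1, hex.choose.2 + θ.2) : Raiz n)) := by
      rw [invol, dif_pos ⟨rfl, hθκ⟩, dif_pos hex]
    obtain ⟨hϑμ, hϑ1⟩ := hex.choose_spec
    set ϑ : Raiz n := hex.choose with hϑdef
    set η' : Raiz n := ((θ.1, ϑ.2 + θ.2) : Raiz n) with hη'def
    have hlenη' : ((η'.2 : ℕ)) = ((ϑ.2 : ℕ)) + ((θ.2 : ℕ)) := by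
      rw [hη'def]; push_cast; ring
    have hη'θ : η' ≠ θ := by
      intro h
      have := congrArg (fun r : Raiz n => ((r.2 : ℕ))) h
      simp only [hlenη'] at this
      have := ϑ.2.pos
      omega
    have hconc : ∀ j, η'.dimAt j = θ.dimAt j + ϑ.dimAt j := dimAt_concat θ ϑ hϑ1
    have hκ' : ∀ j, dsum (η' ::ₘ (κ.erase θ).erase ϑ) j = 1 := by
      intro j
      rw [dsum_cons, hconc]
      have e3 := dsum_erase hϑμ j
      have e4 := dsum_erase hθκ j
      rw [hκ j] at e4
      omega
    have hθlt' : θ.2 < η'.2 := PNat.lt_add_left θ.2 ϑ.2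
    have hnodκ := nodup_of_dsum hκ
    have hnodκ' := nodup_of_dsum hκ'
    have hcE : cE θ η' = X ϑ := by
      rw [cE, if_neg hη'θ, if_pos ⟨rfl, hθlt'⟩]
      congr 1
      refine Prod.ext ?_ ?_
      · rw [beg_sub_one θ, ← hϑ1]
      · show η'.2 - θ.2 = ϑ.2
        rw [hη'def]
        exact pnat_add_sub ϑ.2 θ.2
    have hcard : Multiset.card (η' ::ₘ (κ.erase θ).erase ϑ) + 1 = Multiset.card κ := by
      have c1 : 0 < Multiset.card κ := Multiset.card_pos_iff_exists_mem.2 ⟨θ, hθκ⟩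
      have c2 : 0 < Multiset.card (κ.erase θ) := Multiset.card_pos_iff_exists_mem.2 ⟨ϑ, hϑμ⟩
      have e1 : Multiset.card (κ.erase θ) = Multiset.card κ - 1 := by
        rw [Multiset.card_erase_of_mem hθκ, Nat.pred_eq_sub_one]
      have e2 : Multiset.card ((κ.erase θ).erase ϑ) = Multiset.card (κ.erase θ) - 1 := by
        rw [Multiset.card_erase_of_mem hϑμ, Nat.pred_eq_sub_one]
      rw [Multiset.card_cons, e2, e1]
      omega
    have hterm1 : term θ (κ, θ) = ((-1 : ℚ) ^ (Multiset.card κ + 1)) • xPow (κ.erase θ) := by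
      rw [term_eq, cE, if_pos rfl, Multiset.count_eq_one_of_mem hnodκ hθκ]
      norm_num
    have hterm2 : term θ (η' ::ₘ (κ.erase θ).erase ϑ, η') =
        ((-1 : ℚ) ^ (Multiset.card κ)) • xPow (κ.erase θ) := by
      rw [term_eq, hcE,
        Multiset.count_eq_one_of_mem hnodκ' (Multiset.mem_cons_self _ _),
        Multiset.erase_cons_head]
      rw [← hcard]
      push_cast
      rw [mul_one, mul_smul_comm, ← xPow_cons, Multiset.cons_erase hϑμ]
    refine ⟨?_, ?_, ?_, ?_, ?_⟩
    · rw [hinv, hterm1, hterm2, ← hcard]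
      rw [show Multiset.card (η' ::ₘ (κ.erase θ).erase ϑ) + 1 + 1 =
        Multiset.card (η' ::ₘ (κ.erase θ).erase ϑ) + 2 from rfl]
      rw [add_comm]
      exact sign_cancel _ _
    · rw [hinv]; exact hκ'
    · rw [hinv]
      show ((η'.2 : ℕ)) ≤ n
      exact len_le_of_dsum hκ' (Multiset.mem_cons_self _ _)
    · rw [hinv, invol, dif_neg (fun h => hη'θ h.1),
        dif_pos (⟨Multiset.mem_cons_self _ _, rfl, hθlt'⟩ :
          ((η' ::ₘ (κ.erase θ).erase ϑ, η') : Multiset (Raiz n) × Raiz n).2 ∈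
            (η' ::ₘ (κ.erase θ).erase ϑ, η').1 ∧ (η' ::ₘ (κ.erase θ).erase ϑ, η').2.1 = θ.1 ∧
            θ.2 < (η' ::ₘ (κ.erase θ).erase ϑ, η').2.2)]
      refine Prod.ext ?_ rfl
      show θ ::ₘ ((θ.1 - (((θ.2 : ℕ)) : ZMod n), η'.2 - θ.2) : Raiz n) ::ₘ
        (η' ::ₘ (κ.erase θ).erase ϑ).erase η' = κ
      rw [Multiset.erase_cons_head]
      have hϑeq : ((θ.1 - (((θ.2 : ℕ)) : ZMod n), η'.2 - θ.2) : Raiz n) = ϑ := by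
        refine Prod.ext (by rw [← hϑ1]) ?_
        show η'.2 - θ.2 = ϑ.2
        rw [hη'def]
        exact pnat_add_sub ϑ.2 θ.2
      rw [hϑeq, Multiset.cons_erase hϑμ, Multiset.cons_erase hθκ]
    · intro _
      rw [hinv]
      intro h
      exact hη'θ (congrArg Prod.snd h)
  · by_cases h2 : η ∈ κ ∧ η.1 = θ.1 ∧ θ.2 < η.2
    · obtain ⟨hηκ, hη1, hηlt⟩ := h2
      have hηθ : η ≠ θ := by
        intro h
        rw [h] at hηlt
        exact lt_irrefl _ hηlt
      have hinv : invol θ (κ, η) =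
          (θ ::ₘ ((θ.1 - (((θ.2 : ℕ)) : ZMod n), η.2 - θ.2) : Raiz n) ::ₘ κ.erase η, θ) := by
        rw [invol, dif_neg h1, dif_pos ⟨hηκ, hη1, hηlt⟩]
      set ϑ : Raiz n := ((θ.1 - (((θ.2 : ℕ)) : ZMod n), η.2 - θ.2) : Raiz n) with hϑdef
      have hηe : η = (θ.1, ϑ.2 + θ.2) := by
        refine Prod.ext hη1 ?_
        show η.2 = η.2 - θ.2 + θ.2
        exact (pnat_sub_add hηlt).symm
      have hconc : ∀ j, η.dimAt j = θ.dimAt j + ϑ.dimAt j := by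
        intro j
        conv_lhs => rw [hηe]
        exact dimAt_concat θ ϑ rfl j
      have hκ'' : ∀ j, dsum (θ ::ₘ ϑ ::ₘ κ.erase η) j = 1 := by
        intro j
        rw [dsum_cons, dsum_cons]
        have e3 := dsum_erase hηκ j
        rw [hκ j] at e3
        have := hconc j
        omega
      have hnodκ := nodup_of_dsum hκ
      have hnodκ'' := nodup_of_dsum hκ''
      have hcard : Multiset.card (θ ::ₘ ϑ ::ₘ κ.erase η) = Multiset.card κ + 1 := by
        have c1 : 0 < Multiset.card κ := Multiset.card_pos_iff_exists_mem.2 ⟨η, hηκ⟩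
        have e1 : Multiset.card (κ.erase η) = Multiset.card κ - 1 := by
          rw [Multiset.card_erase_of_mem hηκ, Nat.pred_eq_sub_one]
        rw [Multiset.card_cons, Multiset.card_cons, e1]
        omega
      have hcE : cE θ η = X ϑ := by
        rw [cE, if_neg hηθ, if_pos ⟨hη1, hηlt⟩]
        congr 1
        exact Prod.ext (by rw [beg_sub_one θ]) rfl
      have hterm1 : term θ (κ, η) =
          ((-1 : ℚ) ^ (Multiset.card κ + 1)) • xPow (ϑ ::ₘ κ.erase η) := by
        rw [term_eq, hcE, Multiset.count_eq_one_of_mem hnodκ hηκ]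
        push_cast
        rw [mul_one, mul_smul_comm, ← xPow_cons]
      have hterm2 : term θ (θ ::ₘ ϑ ::ₘ κ.erase η, θ) =
          ((-1 : ℚ) ^ (Multiset.card κ + 2)) • xPow (ϑ ::ₘ κ.erase η) := by
        rw [term_eq, cE, if_pos rfl,
          Multiset.count_eq_one_of_mem hnodκ'' (Multiset.mem_cons_self _ _),
          Multiset.erase_cons_head, hcard]
        push_cast
        rw [one_mul, mul_one]
      refine ⟨?_, ?_, ?_, ?_, ?_⟩
      · rw [hinv, hterm1, hterm2]
        exact sign_cancel _ _
      · rw [hinv]; exact hκ''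
      · rw [hinv]
        show ((θ.2 : ℕ)) ≤ n
        exact hlt.le
      · rw [hinv, invol, dif_pos ⟨rfl, Multiset.mem_cons_self _ _⟩]
        have hexB : ∃ ϑ' ∈ (θ ::ₘ ϑ ::ₘ κ.erase η).erase θ, ϑ'.1 = θ.1 - (((θ.2 : ℕ)) : ZMod n) :=
          ⟨ϑ, by rw [Multiset.erase_cons_head]; exact Multiset.mem_cons_self _ _, rfl⟩
        rw [dif_pos hexB]
        obtain ⟨hm, he⟩ := hexB.choose_spec
        obtain ⟨hdB1, hdB0⟩ := erase_dsum_facts hlt hκ'' (Multiset.mem_cons_self _ _)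
        have hch : hexB.choose = ϑ :=
          end_unique hdB1 hm
            (by rw [Multiset.erase_cons_head]; exact Multiset.mem_cons_self _ _) he rfl
        rw [hch]
        refine Prod.ext ?_ ?_
        · show ((θ.1, ϑ.2 + θ.2) : Raiz n) ::ₘ ((θ ::ₘ ϑ ::ₘ κ.erase η).erase θ).erase ϑ = κ
          rw [Multiset.erase_cons_head, Multiset.erase_cons_head, ← hηe,
            Multiset.cons_erase hηκ]
        · show ((θ.1, ϑ.2 + θ.2) : Raiz n) = η
          exact hηe.symm
      · intro _
        rw [hinv]
        intro h
        exact hηθ ((congrArg Prod.snd h).symm)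
    · have hinv : invol θ (κ, η) = (κ, η) := by rw [invol, dif_neg h1, dif_neg h2]
      have hterm0 : term θ (κ, η) = 0 := by
        rw [term_eq]
        by_cases hηθ : η = θ
        · have hθκ : η ∉ κ := fun hm => h1 ⟨hηθ, hηθ ▸ hm⟩
          rw [Multiset.count_eq_zero_of_notMem hθκ]
          push_cast
          rw [mul_zero, zero_smul, mul_zero]
        · rw [cE, if_neg hηθ]
          by_cases hc : η.1 = θ.1 ∧ θ.2 < η.2
          · have hηκ : η ∉ κ := fun hm => h2 ⟨hm, hc⟩
            rw [Multiset.count_eq_zero_of_notMem hηκ]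
            push_cast
            rw [mul_zero, zero_smul, mul_zero]
          · rw [if_neg hc, zero_mul]
      exact ⟨by rw [hinv, hterm0, add_zero], by rw [hinv]; exact hκ,
        by rw [hinv]; exact hη, by rw [hinv, hinv], fun h => absurd hterm0 h⟩

end EtilAux

namespace EtilAux

variable {n : ℕ} [NeZero n]

lemma eq_singleton_of_full {θ : Raiz n} (hl : ((θ.2 : ℕ)) = n) {κ : Multiset (Raiz n)}
    (hκ : ∀ j, dsum κ j = 1) (hθκ : θ ∈ κ) : κ = {θ} := by
  have hs := sum_len_of_dsum hκ
  have h0 : κ.erase θ = 0 := by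
    by_contra h
    obtain ⟨a, ha⟩ := Multiset.exists_mem_of_ne_zero h
    have h1 : ((θ.2 : ℕ)) + (((κ.erase θ).map (fun ϑ => ((ϑ.2 : ℕ)))).sum) = n := by
      have h2 : (Multiset.map (fun ϑ => ((ϑ.2 : ℕ))) (θ ::ₘ κ.erase θ)).sum = n := by
        rw [Multiset.cons_erase hθκ]
        exact hs
      simpa using h2
    have h2 := le_map_sum (f := fun ϑ => ((ϑ.2 : ℕ))) ha
    have := a.2.pos
    omega
  rw [← Multiset.cons_erase hθκ, h0]
  rfl

lemma pderiv_Ppoly (η : Raiz n) : pderiv η (Ppoly n) = ∑ κ ∈ kostant n (fun _ => 1) n,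
    (((-1 : ℚ) ^ (Multiset.card κ + 1) * ((Multiset.count η κ : ℕ) : ℚ)) • xPow (κ.erase η)) := by
  rw [Ppoly, map_sum]
  refine Finset.sum_congr rfl fun κ _ => ?_
  rw [Derivation.map_smul, pderiv_xPow, smul_smul]

end EtilAux


open EtilAux in
open Classical in
/-- For every raiz `θ`, `Ẽ(θ)(P_n) = 1` if `dim θ = α_n` (the all-ones vector),
and `Ẽ(θ)(P_n) = 0` otherwise. -/
theorem Etil_Ppoly {n : ℕ} (hn : 2 ≤ n) (θ : Raiz n) :
    Etil θ (Ppoly n) = if (∀ j : ZMod n, θ.dimAt j = 1) then 1 else 0 := by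
  haveI : NeZero n := ⟨by omega⟩
  have hcond : (∀ j : ZMod n, θ.dimAt j = 1) ↔ ((θ.2 : ℕ)) = n := by
    constructor
    · intro h
      have h2 : ∑ j : ZMod n, θ.dimAt j = ((θ.2 : ℕ)) := sum_dAt θ.1 ((θ.2 : ℕ))
      rw [Finset.sum_congr rfl (fun j _ => h j)] at h2
      simpa [ZMod.card] using h2.symm
    · intro h j
      rw [dimAt_eq_dAt, h]
      exact dAt_n_eq_one θ.1 j
  have hsum : Etil θ (Ppoly n) =
      ∑ a ∈ (kostant n (fun _ => 1) n) ×ˢ (raizUpTo n n), term θ a := by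
    rw [Etil_apply θ (Ppoly n) (raizUpTo n n) vars_Ppoly]
    simp_rw [pderiv_Ppoly, Finset.mul_sum]
    rw [Finset.sum_comm, Finset.sum_product]
    rfl
  rw [hsum]
  by_cases hfull : ((θ.2 : ℕ)) = n
  · rw [if_pos (hcond.2 hfull)]
    rw [Finset.sum_eq_single_of_mem (({θ} : Multiset (Raiz n)), θ) ?_ ?_]
    · rw [term_eq, cE, if_pos rfl]
      simp [xPow]
    · rw [Finset.mem_product]
      constructor
      · rw [mem_kostant_iff]
        intro j
        have hd : dsum ({θ} : Multiset (Raiz n)) j = θ.dimAt j := by simp [dsum]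
        rw [hd]
        exact hcond.2 hfull j
      · exact mem_raizUpTo_of_len (le_of_eq hfull)
    · rintro ⟨κ, η⟩ hb hne
      rw [Finset.mem_product] at hb
      have hκ := mem_kostant_iff.1 hb.1
      by_cases hηθ : η = θ
      · by_cases hθκ : θ ∈ κ
        · exact absurd (Prod.ext (eq_singleton_of_full hfull hκ hθκ) hηθ) hne
        · rw [term_eq, Multiset.count_eq_zero_of_notMem (by rw [hηθ]; exact hθκ)]
          push_cast
          rw [mul_zero, zero_smul, mul_zero]
      · have hlen : ((η.2 : ℕ)) ≤ n := len_le_of_mem_raizUpTo hb.2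
        rw [term_eq, cE, if_neg hηθ, if_neg ?_, zero_mul]
        rintro ⟨-, hlt2⟩
        have : ((θ.2 : ℕ)) < ((η.2 : ℕ)) := hlt2
        omega
  · rw [if_neg (fun h => hfull (hcond.1 h))]
    rcases Nat.lt_or_ge ((θ.2 : ℕ)) n with hlt | hge
    · apply Finset.sum_involution (fun a _ => invol θ a)
      · rintro ⟨κ, η⟩ ha
        rw [Finset.mem_product] at ha
        exact (invol_main hlt (mem_kostant_iff.1 ha.1) (len_le_of_mem_raizUpTo ha.2)).1
      · rintro ⟨κ, η⟩ ha hne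
        rw [Finset.mem_product] at ha
        exact (invol_main hlt (mem_kostant_iff.1 ha.1) (len_le_of_mem_raizUpTo ha.2)).2.2.2.2 hne
      · rintro ⟨κ, η⟩ ha
        rw [Finset.mem_product] at ha
        have h := invol_main hlt (mem_kostant_iff.1 ha.1) (len_le_of_mem_raizUpTo ha.2)
        rw [Finset.mem_product]
        exact ⟨mem_kostant_iff.2 h.2.1, mem_raizUpTo_of_len h.2.2.1⟩
      · rintro ⟨κ, η⟩ ha
        rw [Finset.mem_product] at ha
        exact (invol_main hlt (mem_kostant_iff.1 ha.1) (len_le_of_mem_raizUpTo ha.2)).2.2.2.1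
    · have hgt : n < ((θ.2 : ℕ)) := lt_of_le_of_ne hge (fun h => hfull h.symm)
      apply Finset.sum_eq_zero
      rintro ⟨κ, η⟩ hb
      rw [Finset.mem_product] at hb
      have hlen : ((η.2 : ℕ)) ≤ n := len_le_of_mem_raizUpTo hb.2
      rw [term_eq, cE, if_neg ?_, if_neg ?_, zero_mul]
      · rintro ⟨-, hlt2⟩
        have : ((θ.2 : ℕ)) < ((η.2 : ℕ)) := hlt2
        omega
      · intro h
        rw [h] at hlen
        omega
end

section
/- For every integer p ≥ 1 and every i ∈ ℤ/nℤ, the operator a_p commutes with the Chevalley operators: [a_p, e_i^T] = 0 and [a_p, f_i^T] = 0 as operators on N. -/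
/-!
Common setup: raiz for the cyclic quiver `Ã_{n-1}`, the polynomial algebra
`N = ℚ[x_θ : θ ∈ R⁺(n)]`, and the locally finite differential operators
`E(θ)`, `Ẽ(θ)`, `B(θ)`, `𝔅_i`, `𝔈_i`, `Δ_i`, and the Chevalley operators
`e_i^T`, `h_i^T`, `f_i^T`, following Finkelberg–Kuznetsov.
-/

open MvPolynomial

open MvPolynomial Finset in
lemma vars_pderiv {σ : Type*} [DecidableEq σ] (η : σ) (P : MvPolynomial σ ℚ) :
    (pderiv η P).vars ⊆ P.vars := by
  intro x hx
  have h1 : pderiv η P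
      = ∑ s ∈ P.support, monomial (s - Finsupp.single η 1) (coeff s P * s η) := by
    conv_lhs => rw [P.as_sum]
    rw [map_sum]
    exact Finset.sum_congr rfl fun s _ => pderiv_monomial
  rw [h1] at hx
  obtain ⟨s, hs, hx⟩ := Finset.mem_biUnion.mp (MvPolynomial.vars_sum_subset _ _ hx)
  by_cases hc : coeff s P * s η = 0
  · rw [hc] at hx; simp at hx
  · rw [MvPolynomial.vars_monomial hc] at hx
    exact (MvPolynomial.mem_vars x).mpr ⟨s, hs, Finsupp.support_tsub hx⟩

open MvPolynomial Finset in
lemma pderiv_pderiv_comm' {σ : Type*} [DecidableEq σ] (i j : σ) (P : MvPolynomial σ ℚ) :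
    pderiv i (pderiv j P) = pderiv j (pderiv i P) := by
  induction P using MvPolynomial.induction_on with
  | C a => simp
  | add p q hp hq => simp [hp, hq]
  | mul_X p k hp =>
      by_cases hij : i = j
      · rw [hij]
      · by_cases hik : k = i <;> by_cases hjk : k = j <;>
          simp [pderiv_mul, hp, hik, hjk, hij, Ne.symm hij,
            pderiv_X_self, pderiv_X_of_ne, Pi.single_apply] <;> ring
section DiffCalc
open MvPolynomial Finset

variable {n : ℕ}

lemma diffOp_eq_sum (c : Raiz n → Pol n) (P : Pol n) {S : Finset (Raiz n)}
    (h : P.vars ⊆ S) : diffOp c P = ∑ η ∈ S, c η * pderiv η P := by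
  rw [diffOp]
  refine Finset.sum_subset h fun η _ hη => ?_
  rw [pderiv_eq_zero_of_notMem_vars hη, mul_zero]

lemma diffOp_zero (c : Raiz n → Pol n) : diffOp c (0 : Pol n) = 0 := by
  simp [diffOp]

lemma diffOp_one (c : Raiz n → Pol n) : diffOp c (1 : Pol n) = 0 := by
  rw [show (1 : Pol n) = C 1 from rfl]
  simp [diffOp, MvPolynomial.vars_C]

lemma diffOp_X (c : Raiz n → Pol n) (ϑ : Raiz n) : diffOp c (X ϑ) = c ϑ := by
  simp [diffOp, MvPolynomial.vars_X, pderiv_X_self]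

lemma diffOp_add (c : Raiz n → Pol n) (P Q : Pol n) :
    diffOp c (P + Q) = diffOp c P + diffOp c Q := by
  classical
  rw [diffOp_eq_sum c P (S := P.vars ∪ Q.vars) subset_union_left,
    diffOp_eq_sum c Q (S := P.vars ∪ Q.vars) subset_union_right,
    diffOp_eq_sum c (P + Q) (S := P.vars ∪ Q.vars) (MvPolynomial.vars_add_subset P Q),
    ← Finset.sum_add_distrib]
  exact Finset.sum_congr rfl fun η _ => by rw [map_add, mul_add]

lemma diffOp_sub (c : Raiz n → Pol n) (P Q : Pol n) :
    diffOp c (P - Q) = diffOp c P - diffOp c Q := by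
  classical
  have hv : (P - Q).vars ⊆ P.vars ∪ Q.vars := by
    rw [sub_eq_add_neg]
    exact (MvPolynomial.vars_add_subset P (-Q)).trans
      (by rw [MvPolynomial.vars_neg])
  rw [diffOp_eq_sum c P (S := P.vars ∪ Q.vars) subset_union_left,
    diffOp_eq_sum c Q (S := P.vars ∪ Q.vars) subset_union_right,
    diffOp_eq_sum c (P - Q) hv, ← Finset.sum_sub_distrib]
  exact Finset.sum_congr rfl fun η _ => by rw [map_sub, mul_sub]

lemma diffOp_smul (c : Raiz n → Pol n) (q : ℚ) (P : Pol n) :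
    diffOp c (q • P) = q • diffOp c P := by
  classical
  have hv : (q • P).vars ⊆ P.vars := by
    rw [show q • P = C q * P by rw [MvPolynomial.smul_eq_C_mul]]
    exact (MvPolynomial.vars_mul _ _).trans (by rw [MvPolynomial.vars_C]; simp)
  rw [diffOp_eq_sum c (q • P) hv, diffOp, Finset.smul_sum]
  refine Finset.sum_congr rfl fun η _ => ?_
  rw [MvPolynomial.smul_eq_C_mul, pderiv_C_mul, MvPolynomial.smul_eq_C_mul]
  ring

lemma diffOp_mul (c : Raiz n → Pol n) (P Q : Pol n) :
    diffOp c (P * Q) = diffOp c P * Q + P * diffOp c Q := by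
  classical
  rw [diffOp_eq_sum c P (S := P.vars ∪ Q.vars) subset_union_left,
    diffOp_eq_sum c Q (S := P.vars ∪ Q.vars) subset_union_right,
    diffOp_eq_sum c (P * Q) (MvPolynomial.vars_mul P Q),
    Finset.sum_mul, Finset.mul_sum, ← Finset.sum_add_distrib]
  exact Finset.sum_congr rfl fun η _ => by rw [pderiv_mul]; ring

lemma diffOp_sum_coeff {ι : Type*} (s : Finset ι) (c : ι → Raiz n → Pol n) (P : Pol n) :
    ∑ t ∈ s, diffOp (c t) P = diffOp (fun η => ∑ t ∈ s, c t η) P := by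
  simp only [diffOp, Finset.sum_mul]
  exact Finset.sum_comm

end DiffCalc
section MasterComm
open MvPolynomial Finset

variable {n : ℕ}

set_option maxHeartbeats 1000000 in
lemma diffOp_comp_eq (d e : Raiz n → Pol n) (P : Pol n) (S : Finset (Raiz n))
    (hPS : P.vars ⊆ S) (he : ∀ η ∈ P.vars, (e η).vars ⊆ S) :
    diffOp d (diffOp e P)
      = (∑ η' ∈ P.vars, diffOp d (e η') * pderiv η' P)
        + ∑ η ∈ S, ∑ η' ∈ S, d η * e η' * pderiv η (pderiv η' P) := by
  classical
  have hvE : (diffOp e P).vars ⊆ S := by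
    rw [diffOp]
    refine (MvPolynomial.vars_sum_subset _ _).trans (Finset.biUnion_subset.mpr ?_)
    exact fun η hη => (MvPolynomial.vars_mul _ _).trans
      (Finset.union_subset (he η hη) ((vars_pderiv η P).trans hPS))
  rw [diffOp_eq_sum d _ hvE]
  have h1 : ∀ η : Raiz n, pderiv η (diffOp e P)
      = ∑ η' ∈ S, (pderiv η (e η') * pderiv η' P + e η' * pderiv η (pderiv η' P)) := by
    intro η
    rw [diffOp_eq_sum e P hPS, map_sum]
    exact Finset.sum_congr rfl fun _ _ => pderiv_mul
  simp only [h1, Finset.mul_sum, mul_add, Finset.sum_add_distrib]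
  congr 1
  · rw [Finset.sum_comm]
    have hz : ∀ x ∈ S, x ∉ P.vars →
        (∑ η ∈ S, d η * (pderiv η (e x) * pderiv x P)) = 0 := by
      intro x _ hx
      simp [pderiv_eq_zero_of_notMem_vars hx]
    rw [← Finset.sum_subset hPS hz]
    refine Finset.sum_congr rfl fun η' hη' => ?_
    rw [diffOp_eq_sum d (e η') (he η' hη'), Finset.sum_mul]
    exact Finset.sum_congr rfl fun η _ => by ring
  · exact Finset.sum_congr rfl fun η _ => Finset.sum_congr rfl fun η' _ => by ring

lemma diffOp_comm (c c' : Raiz n → Pol n)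
    (h : ∀ η, diffOp c (c' η) = diffOp c' (c η)) (P : Pol n) :
    diffOp c (diffOp c' P) = diffOp c' (diffOp c P) := by
  classical
  set S : Finset (Raiz n) :=
    P.vars ∪ P.vars.biUnion (fun η => (c η).vars ∪ (c' η).vars) with hSdef
  have hPS : P.vars ⊆ S := Finset.subset_union_left
  have hc : ∀ η ∈ P.vars, (c η).vars ⊆ S := fun η hη x hx =>
    Finset.mem_union_right _ (Finset.mem_biUnion.mpr ⟨η, hη, Finset.mem_union_left _ hx⟩)
  have hc' : ∀ η ∈ P.vars, (c' η).vars ⊆ S := fun η hη x hx =>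
    Finset.mem_union_right _ (Finset.mem_biUnion.mpr ⟨η, hη, Finset.mem_union_right _ hx⟩)
  rw [diffOp_comp_eq c c' P S hPS hc', diffOp_comp_eq c' c P S hPS hc]
  congr 1
  · exact Finset.sum_congr rfl fun η' _ => by rw [h η']
  · rw [Finset.sum_comm]
    exact Finset.sum_congr rfl fun a _ => Finset.sum_congr rfl fun b _ => by
      rw [pderiv_pderiv_comm']; ring

end MasterComm
section Comb
open MvPolynomial Finset

variable {n : ℕ}

lemma card_fiber_zmod (hn : 0 < n) (p : ℕ) (c : ZMod n) :
    (((Finset.range (p * n)).filter (fun t => ((t : ℕ) : ZMod n) = c)).card) = p := by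
  haveI : NeZero n := ⟨hn.ne'⟩
  have hval : ((c.val : ℕ) : ZMod n) = c := ZMod.natCast_rightInverse c
  have hset : (Finset.range (p * n)).filter (fun t => ((t : ℕ) : ZMod n) = c)
      = (Finset.range p).image (fun k => c.val + k * n) := by
    ext t
    simp only [Finset.mem_filter, Finset.mem_range, Finset.mem_image]
    constructor
    · rintro ⟨ht, hc⟩
      refine ⟨t / n, ?_, ?_⟩
      · exact Nat.div_lt_of_lt_mul (by rwa [mul_comm] at ht)
      · have : (t : ZMod n) = ((c.val : ℕ) : ZMod n) := by rw [hval, hc]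
        have hmod : t % n = c.val % n := (ZMod.natCast_eq_natCast_iff t c.val n).mp this
        have hcv : c.val < n := ZMod.val_lt c
        have h1 := Nat.div_add_mod t n
        have h2 : t / n * n = n * (t / n) := Nat.mul_comm _ _
        have h3 : c.val % n = c.val := Nat.mod_eq_of_lt hcv
        omega
    · rintro ⟨k, hk, rfl⟩
      have hcv : c.val < n := ZMod.val_lt c
      constructor
      · calc c.val + k * n < n + k * n := by omega
          _ = (k + 1) * n := by ring
          _ ≤ p * n := Nat.mul_le_mul_right n (by omega)
      · rw [Nat.cast_add, Nat.cast_mul, ZMod.natCast_self, mul_zero, add_zero, hval]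
  rw [hset, Finset.card_image_of_injective _ (fun a b hab =>
    Nat.eq_of_mul_eq_mul_right hn (by omega)), Finset.card_range]

lemma sum_dimAt [NeZero n] (θ : Raiz n) :
    ∑ j : ZMod n, θ.dimAt j = (θ.2 : ℕ) := by
  have h := Finset.card_eq_sum_card_fiberwise
    (f := fun t : ℕ => θ.1 - ((t : ℕ) : ZMod n)) (s := Finset.range (θ.2 : ℕ))
    (t := Finset.univ) (fun x _ => Finset.mem_univ _)
  rw [Finset.card_range] at h
  simp only [Raiz.dimAt]
  exact h.symm

lemma dimAt_of_len (hn : 0 < n) (p : ℕ) (a : ZMod n) (l : ℕ+) (hl : (l : ℕ) = p * n)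
    (j : ZMod n) : Raiz.dimAt (a, l) j = p := by
  haveI : NeZero n := ⟨hn.ne'⟩
  rw [Raiz.dimAt]
  have heq : (Finset.range ((l : ℕ))).filter
        (fun t => (a : ZMod n) - ((t : ℕ) : ZMod n) = j)
      = (Finset.range ((l : ℕ))).filter (fun t => ((t : ℕ) : ZMod n) = a - j) := by
    refine Finset.filter_congr fun t _ => ?_
    constructor
    · intro h; rw [← h]; ring
    · intro h; rw [h]; ring
  rw [heq, hl, card_fiber_zmod hn]

lemma filter_aPos_eq [NeZero n] (p : ℕ) (hpn : 0 < p * n) :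
    (raizUpTo n (p * n)).filter (fun θ => ∀ j, θ.dimAt j = p)
      = Finset.univ.image (fun a : ZMod n => ((a, ⟨p * n, hpn⟩) : Raiz n)) := by
  classical
  have hn0 : 0 < n := Nat.pos_of_ne_zero (NeZero.ne n)
  ext θ
  obtain ⟨a, l⟩ := θ
  rw [Finset.mem_filter]
  simp only [Finset.mem_filter, Finset.mem_image, Finset.mem_univ, true_and, raizUpTo,
    Finset.mem_product]
  constructor
  · rintro ⟨-, hdim⟩
    refine ⟨a, ?_⟩
    have hsum : ∑ j : ZMod n, Raiz.dimAt (a, l) j = (l : ℕ) := sum_dimAt _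
    have hnp : ∑ j : ZMod n, Raiz.dimAt (a, l) j = n * p := by
      rw [Finset.sum_congr rfl fun j _ => hdim j, Finset.sum_const, smul_eq_mul,
        Finset.card_univ, ZMod.card]
    have hlval : (l : ℕ) = p * n := by rw [← hsum, hnp, Nat.mul_comm]
    have : l = (⟨p * n, hpn⟩ : ℕ+) := PNat.coe_injective hlval
    rw [this]
  · rintro ⟨b, hb⟩
    have ha : a = b := (congrArg Prod.fst hb).symm
    have hl : l = (⟨p * n, hpn⟩ : ℕ+) := (congrArg Prod.snd hb).symm
    subst ha hl
    refine ⟨Finset.mem_product.mpr ⟨?_, ?_⟩, fun j => dimAt_of_len hn0 p a (⟨p * n, hpn⟩ : ℕ+) rfl j⟩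
    · simp only [Finset.mem_image, Finset.mem_range]
      exact ⟨a.val, ZMod.val_lt a, ZMod.natCast_rightInverse a⟩
    · simp only [Finset.mem_image, Finset.mem_range]
      exact ⟨p * n - 1, by omega, PNat.coe_injective (by show p * n - 1 + 1 = p * n; omega)⟩

end Comb
section CoeffDefs
open MvPolynomial Finset

variable {n : ℕ}

/-- Coefficient function of `a_p` as a single `diffOp`. -/
noncomputable def CpFun {n : ℕ} (M : ℕ+) : Raiz n → Pol n := fun η =>
  if η.2 = M then 1 else if M < η.2 then X ((η.1, η.2 - M) : Raiz n) else 0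

/-- Coefficient function of `e_i^T`. -/
noncomputable def GFun {n : ℕ} (i : ZMod n) : Raiz n → Pol n := fun η =>
  if η = Raiz.simple i then 1
  else if η.1 = i ∧ 1 < η.2 then X ((i - 1, η.2 - 1) : Raiz n) else 0

/-- Coefficient function of the first-order part of `f_i^T`. -/
noncomputable def FFun {n : ℕ} (i : ZMod n) : Raiz n → Pol n := fun ϑ =>
  (if Raiz.beg ϑ = i + 1 then X ((ϑ.1, 1 + ϑ.2) : Raiz n) else 0)
  - (if ϑ.1 = i - 1 then X ((i, ϑ.2 + 1) : Raiz n) else 0)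
  + X (Raiz.simple i) *
      ((if Raiz.beg ϑ = i then X ϑ else 0) - (if Raiz.beg ϑ = i + 1 then X ϑ else 0))

lemma pnat_eq_iff {a b : ℕ+} : a = b ↔ (a : ℕ) = (b : ℕ) :=
  ⟨fun h => congrArg _ h, fun h => PNat.coe_injective h⟩

lemma pnat_lt_iff {a b : ℕ+} : a < b ↔ (a : ℕ) < (b : ℕ) := Iff.rfl

lemma pnat_sub_coe {a b : ℕ+} (h : (b : ℕ) < (a : ℕ)) :
    ((a - b : ℕ+) : ℕ) = (a : ℕ) - (b : ℕ) := by
  rw [PNat.sub_coe, if_pos (by exact_mod_cast h)]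

lemma beg_pair (a : ZMod n) (l : ℕ+) :
    Raiz.beg ((a, l) : Raiz n) = a - (((l : ℕ)) : ZMod n) + 1 := rfl

lemma beg_sub_one_eq (b : ZMod n) (M : ℕ+) (h0 : (((M : ℕ)) : ZMod n) = 0) :
    Raiz.beg ((b, M) : Raiz n) - 1 = b := by
  rw [beg_pair, h0]
  ring

lemma beg_simple (i : ZMod n) : Raiz.beg (Raiz.simple i) = i := by
  show i - (((1 : ℕ+) : ℕ) : ZMod n) + 1 = i
  simp

-- evaluation lemmas for CpFun
lemma CpFun_eval_eq {M : ℕ+} {a : ZMod n} {l : ℕ+} (h : (l : ℕ) = (M : ℕ)) :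
    CpFun M ((a, l) : Raiz n) = 1 := by
  show (if l = M then (1 : Pol n) else if M < l then X ((a, l - M) : Raiz n) else 0) = 1
  rw [if_pos (pnat_eq_iff.mpr h)]

lemma CpFun_eval_lt {M : ℕ+} {a : ZMod n} {l : ℕ+} (h : (M : ℕ) < (l : ℕ)) :
    CpFun M ((a, l) : Raiz n) = X ((a, l - M) : Raiz n) := by
  show (if l = M then (1 : Pol n) else if M < l then X ((a, l - M) : Raiz n) else 0) = _
  rw [if_neg (fun hc => by rw [pnat_eq_iff] at hc; omega), if_pos ((pnat_lt_iff).mpr h)]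

lemma CpFun_eval_small {M : ℕ+} {a : ZMod n} {l : ℕ+} (h : (l : ℕ) < (M : ℕ)) :
    CpFun M ((a, l) : Raiz n) = 0 := by
  show (if l = M then (1 : Pol n) else if M < l then X ((a, l - M) : Raiz n) else 0) = 0
  rw [if_neg (fun hc => by rw [pnat_eq_iff] at hc; omega),
    if_neg (fun hc => by rw [pnat_lt_iff] at hc; omega)]

lemma CpFun_simple {M : ℕ+} (hM2 : 2 ≤ (M : ℕ)) (i : ZMod n) :
    CpFun M (Raiz.simple i) = 0 := by
  show CpFun M ((i, 1) : Raiz n) = 0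
  exact CpFun_eval_small (by rw [PNat.one_coe]; omega)

-- evaluation lemmas for GFun
lemma GFun_eval_ne {i a : ZMod n} {l : ℕ+} (h : a ≠ i) : GFun i ((a, l) : Raiz n) = 0 := by
  show (if ((a, l) : Raiz n) = Raiz.simple i then (1 : Pol n)
    else if a = i ∧ 1 < l then X ((i - 1, l - 1) : Raiz n) else 0) = 0
  rw [if_neg (fun hc => h (congrArg Prod.fst hc)), if_neg (fun hc => h hc.1)]

lemma GFun_eval_one (i : ZMod n) : GFun i ((i, 1) : Raiz n) = 1 := by
  show (if ((i, 1) : Raiz n) = Raiz.simple i then (1 : Pol n)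
    else if i = i ∧ 1 < (1 : ℕ+) then X ((i - 1, (1 : ℕ+) - 1) : Raiz n) else 0) = 1
  simp [Raiz.simple]

lemma GFun_eval_big {i : ZMod n} {l : ℕ+} (h : 1 < (l : ℕ)) :
    GFun i ((i, l) : Raiz n) = X ((i - 1, l - 1) : Raiz n) := by
  show (if ((i, l) : Raiz n) = Raiz.simple i then (1 : Pol n)
    else if i = i ∧ 1 < l then X ((i - 1, l - 1) : Raiz n) else 0) = _
  rw [if_neg, if_pos]
  · exact ⟨rfl, by rw [pnat_lt_iff, PNat.one_coe]; exact h⟩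
  · intro hc
    have h1 : l = 1 := congrArg Prod.snd hc
    have h2 : (l : ℕ) = 1 := by rw [h1, PNat.one_coe]
    omega

lemma diffOp_ite_X (c : Raiz n → Pol n) (q : Prop) [Decidable q] (u : Raiz n) :
    diffOp c (if q then X u else 0) = if q then c u else 0 := by
  split_ifs
  · exact diffOp_X c u
  · exact diffOp_zero c

end CoeffDefs
section EPart
open MvPolynomial Finset

variable {n : ℕ}

lemma eT_eq (i : ZMod n) : eT i = diffOp (GFun i) := by
  have hb : Raiz.beg (Raiz.simple i) - 1 = i - 1 := by rw [beg_simple]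
  rw [eT, Etil]
  refine congrArg diffOp (funext fun η => ?_)
  rw [hb]
  simp only [GFun, Raiz.simple]
  congr

lemma aPos_eq_diffOp [NeZero n] (p : ℕ) (hpn : 0 < p * n) :
    aPos n p = diffOp (CpFun (⟨p * n, hpn⟩ : ℕ+) : Raiz n → Pol n) := by
  classical
  have hM0 : (((⟨p * n, hpn⟩ : ℕ+) : ℕ) : ZMod n) = 0 := by
    show ((p * n : ℕ) : ZMod n) = 0
    push_cast
    rw [ZMod.natCast_self, mul_zero]
  set M : ℕ+ := ⟨p * n, hpn⟩ with hMdef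
  funext P
  rw [aPos]
  rw [Finset.filter_congr_decidable]
  rw [filter_aPos_eq p hpn, ← hMdef]
  rw [Finset.sum_image (fun a _ b _ hab => congrArg Prod.fst hab)]
  simp only [Etil]
  rw [diffOp_sum_coeff]
  refine congrFun (congrArg diffOp (funext fun η => ?_)) P
  obtain ⟨b, l⟩ := η
  rw [Finset.sum_eq_single_of_mem b (Finset.mem_univ _)]
  · have hbeg : Raiz.beg ((b, M) : Raiz n) - 1 = b := beg_sub_one_eq b M hM0
    rw [hbeg]
    rcases lt_trichotomy (l : ℕ) ((M : ℕ)) with h | h | h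
    · rw [if_neg (fun hc => by
          have h2 : l = M := congrArg Prod.snd hc
          rw [pnat_eq_iff] at h2
          omega),
        if_neg (fun hc => by
          have h2 : (M : ℕ) < (l : ℕ) := hc.2
          omega),
        CpFun_eval_small h]
    · rw [if_pos (show ((b, l) : Raiz n) = (b, M) by
          rw [show l = M from PNat.coe_injective h]),
        CpFun_eval_eq h]
    · rw [if_neg (fun hc => by
          have h2 : l = M := congrArg Prod.snd hc
          rw [pnat_eq_iff] at h2
          omega),
        if_pos ⟨rfl, pnat_lt_iff.mpr h⟩, CpFun_eval_lt h]
  · intro a _ ha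
    rw [if_neg (fun hc => ha ((congrArg Prod.fst hc).symm)),
      if_neg (fun hc => ha hc.1.symm)]

lemma key_e (M : ℕ+) (hM0 : (((M : ℕ)) : ZMod n) = 0) (hM2 : 2 ≤ (M : ℕ))
    (i : ZMod n) (η : Raiz n) :
    diffOp (CpFun M) (GFun i η) = diffOp (GFun i) (CpFun M η) := by
  obtain ⟨a, l⟩ := η
  by_cases hai : a = i
  · subst hai
    by_cases hl1 : (l : ℕ) = 1
    · have hone : l = 1 := PNat.coe_injective (by rw [hl1, PNat.one_coe])
      subst hone
      rw [GFun_eval_one, diffOp_one,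
        CpFun_eval_small (show ((1 : ℕ+) : ℕ) < (M : ℕ) by rw [PNat.one_coe]; omega),
        diffOp_zero]
    · have hl2 : 1 < (l : ℕ) := by have := l.pos; omega
      have e1 : ((l - 1 : ℕ+) : ℕ) = (l : ℕ) - 1 := by
        rw [pnat_sub_coe (a := l) (b := 1) (by rw [PNat.one_coe]; omega), PNat.one_coe]
      rw [GFun_eval_big hl2, diffOp_X]
      by_cases hA : (M : ℕ) < (l : ℕ)
      · have e2 : ((l - M : ℕ+) : ℕ) = (l : ℕ) - (M : ℕ) := pnat_sub_coe hA
        rw [CpFun_eval_lt hA, diffOp_X]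
        by_cases hB : (l : ℕ) = (M : ℕ) + 1
        · have h1 : l - M = 1 := PNat.coe_injective (by rw [e2, PNat.one_coe]; omega)
          rw [h1, GFun_eval_one,
            CpFun_eval_eq (show ((l - 1 : ℕ+) : ℕ) = (M : ℕ) by rw [e1]; omega)]
        · have e3 : (((l - 1) - M : ℕ+) : ℕ) = (l : ℕ) - 1 - (M : ℕ) := by
            rw [pnat_sub_coe (a := l - 1) (b := M) (by rw [e1]; omega), e1]
          have e4 : (((l - M) - 1 : ℕ+) : ℕ) = (l : ℕ) - (M : ℕ) - 1 := by
            rw [pnat_sub_coe (a := l - M) (b := 1) (by rw [PNat.one_coe, e2]; omega),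
              PNat.one_coe, e2]
          rw [GFun_eval_big (l := l - M) (show 1 < ((l - M : ℕ+) : ℕ) by rw [e2]; omega),
            CpFun_eval_lt (l := l - 1)
              (show (M : ℕ) < ((l - 1 : ℕ+) : ℕ) by rw [e1]; omega)]
          have h2 : (l - 1) - M = (l - M) - 1 :=
            PNat.coe_injective (by rw [e3, e4]; omega)
          rw [h2]
      · rw [CpFun_eval_small (l := l - 1)
            (show ((l - 1 : ℕ+) : ℕ) < (M : ℕ) by rw [e1]; omega)]
        by_cases hB : (l : ℕ) = (M : ℕ)
        · rw [CpFun_eval_eq hB, diffOp_one]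
        · rw [CpFun_eval_small (by omega), diffOp_zero]
  · rw [GFun_eval_ne hai, diffOp_zero]
    rcases lt_trichotomy (l : ℕ) ((M : ℕ)) with h | h | h
    · rw [CpFun_eval_small h, diffOp_zero]
    · rw [CpFun_eval_eq h, diffOp_one]
    · rw [CpFun_eval_lt h, diffOp_X, GFun_eval_ne hai]

end EPart
section FPart
open MvPolynomial Finset

variable {n : ℕ}

lemma diffOp_FFun (cc : Raiz n → Pol n) (i : ZMod n) (a : ZMod n) (l : ℕ+) :
    diffOp cc (FFun i ((a, l) : Raiz n))
      = (if Raiz.beg ((a, l) : Raiz n) = i + 1 then cc ((a, 1 + l) : Raiz n) else 0)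
        - (if a = i - 1 then cc ((i, l + 1) : Raiz n) else 0)
        + (cc (Raiz.simple i) *
             ((if Raiz.beg ((a, l) : Raiz n) = i then X ((a, l) : Raiz n) else 0)
              - (if Raiz.beg ((a, l) : Raiz n) = i + 1 then X ((a, l) : Raiz n) else 0))
           + X (Raiz.simple i) *
             ((if Raiz.beg ((a, l) : Raiz n) = i then cc ((a, l) : Raiz n) else 0)
              - (if Raiz.beg ((a, l) : Raiz n) = i + 1 then cc ((a, l) : Raiz n) else 0))) := by
  simp only [FFun, diffOp_add, diffOp_sub, diffOp_mul, diffOp_ite_X, diffOp_X]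

lemma fT_eq (c : ZMod n → ℚ) (i : ZMod n) (P : Pol n) :
    fT c i P = diffOp (FFun i) P + c i • (X (Raiz.simple i) * P) := by
  have hbs : Raiz.beg (Raiz.simple i) - 1 = i - 1 := by rw [beg_simple]
  have hi1 : i - 1 + 1 = i := by ring
  show diffOp (fun ϑ => if Raiz.beg ϑ = i + 1 then X ((ϑ.1, 1 + ϑ.2) : Raiz n) else 0) P
      - diffOp (fun ϑ =>
          if ϑ.1 = Raiz.beg (Raiz.simple i) - 1 then X ((i, ϑ.2 + 1) : Raiz n) else 0) P
      + X (Raiz.simple i) *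
          (diffOp (fun ϑ => if Raiz.beg ϑ = i - 1 + 1 then X ϑ else 0) P
            - diffOp (fun ϑ => if Raiz.beg ϑ = i + 1 then X ϑ else 0) P + c i • P)
      = diffOp (FFun i) P + c i • (X (Raiz.simple i) * P)
  rw [hbs]
  simp only [hi1]
  have hF : diffOp (FFun i) P
      = diffOp (fun ϑ => if Raiz.beg ϑ = i + 1 then X ((ϑ.1, 1 + ϑ.2) : Raiz n) else 0) P
        - diffOp (fun ϑ => if ϑ.1 = i - 1 then X ((i, ϑ.2 + 1) : Raiz n) else 0) P
        + (X (Raiz.simple i) * diffOp (fun ϑ => if Raiz.beg ϑ = i then X ϑ else 0) P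
           - X (Raiz.simple i) * diffOp (fun ϑ => if Raiz.beg ϑ = i + 1 then X ϑ else 0) P) := by
    simp only [diffOp, FFun, Finset.mul_sum, ← Finset.sum_sub_distrib,
      ← Finset.sum_add_distrib]
    exact Finset.sum_congr rfl fun ϑ _ => by ring
  rw [hF, mul_add, mul_sub, mul_smul_comm]
  ring

end FPart
section KeyF
open MvPolynomial Finset

variable {n : ℕ}

lemma FFun_eval (i a : ZMod n) (l : ℕ+) :
    FFun i ((a, l) : Raiz n)
      = (if Raiz.beg ((a, l) : Raiz n) = i + 1 then X ((a, 1 + l) : Raiz n) else 0)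
        - (if a = i - 1 then X ((i, l + 1) : Raiz n) else 0)
        + X (Raiz.simple i) *
            ((if Raiz.beg ((a, l) : Raiz n) = i then X ((a, l) : Raiz n) else 0)
             - (if Raiz.beg ((a, l) : Raiz n) = i + 1 then X ((a, l) : Raiz n) else 0)) := by
  simp only [FFun]

lemma key_f (M : ℕ+) (hM0 : (((M : ℕ)) : ZMod n) = 0) (hM2 : 2 ≤ (M : ℕ))
    (i : ZMod n) (ϑ : Raiz n) :
    diffOp (CpFun M) (FFun i ϑ) = diffOp (FFun i) (CpFun M ϑ) := by
  obtain ⟨a, l⟩ := ϑ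
  have hL : 0 < (l : ℕ) := l.pos
  have e1l : ((1 + l : ℕ+) : ℕ) = 1 + (l : ℕ) := by rw [PNat.add_coe, PNat.one_coe]
  have el1 : ((l + 1 : ℕ+) : ℕ) = (l : ℕ) + 1 := by rw [PNat.add_coe, PNat.one_coe]
  rw [diffOp_FFun, CpFun_simple hM2, zero_mul, zero_add]
  rcases lt_trichotomy ((l : ℕ) + 1) ((M : ℕ)) with hc | hc | hc
  · -- (l:ℕ) + 1 < M : everything is 0
    rw [CpFun_eval_small (l := 1 + l) (show ((1 + l : ℕ+) : ℕ) < (M : ℕ) by omega),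
      CpFun_eval_small (l := l + 1) (show ((l + 1 : ℕ+) : ℕ) < (M : ℕ) by omega),
      CpFun_eval_small (l := l) (show ((l : ℕ+) : ℕ) < (M : ℕ) by omega),
      diffOp_zero]
    simp
  · -- (l:ℕ) + 1 = M
    have hlM : ((l : ℕ)) < (M : ℕ) := by omega
    have hcast : (((l : ℕ)) : ZMod n) = -1 := by
      have h' : ((((l : ℕ) + 1) : ℕ) : ZMod n) = 0 := by rw [hc, hM0]
      push_cast at h'
      linear_combination h'
    have hcond : (Raiz.beg ((a, l) : Raiz n) = i + 1) ↔ (a = i - 1) := by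
      rw [beg_pair, hcast]
      constructor <;> intro h <;> linear_combination h
    rw [CpFun_eval_eq (l := 1 + l) (show ((1 + l : ℕ+) : ℕ) = (M : ℕ) by omega),
      CpFun_eval_eq (l := l + 1) (show ((l + 1 : ℕ+) : ℕ) = (M : ℕ) by omega),
      CpFun_eval_small (l := l) hlM,
      diffOp_zero]
    simp only [hcond]
    simp
  · -- M < (l:ℕ) + 1
    have hML : (M : ℕ) ≤ (l : ℕ) := by omega
    rcases eq_or_lt_of_le hML with heq | hlt
    · -- (l:ℕ) = M
      have hcast : (((l : ℕ)) : ZMod n) = 0 := by rw [← heq]; exact hM0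
      have hcond1 : (Raiz.beg ((a, l) : Raiz n) = i + 1) ↔ (a = i) := by
        rw [beg_pair, hcast]
        constructor <;> intro h <;> linear_combination h
      have hcond2 : (Raiz.beg ((a, l) : Raiz n) = i) ↔ (a = i - 1) := by
        rw [beg_pair, hcast]
        constructor <;> intro h <;> linear_combination h
      have hone1 : (1 + l) - M = 1 := PNat.coe_injective (by
        rw [pnat_sub_coe (a := 1 + l) (b := M) (by omega), e1l, PNat.one_coe]; omega)
      have hone2 : (l + 1) - M = 1 := PNat.coe_injective (by
        rw [pnat_sub_coe (a := l + 1) (b := M) (by omega), el1, PNat.one_coe]; omega)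
      rw [CpFun_eval_lt (l := 1 + l) (show (M : ℕ) < ((1 + l : ℕ+) : ℕ) by omega),
        CpFun_eval_lt (l := l + 1) (show (M : ℕ) < ((l + 1 : ℕ+) : ℕ) by omega),
        CpFun_eval_eq (l := l) heq.symm,
        diffOp_one, hone1, hone2]
      simp only [hcond1, hcond2]
      rw [show Raiz.simple i = ((i, 1) : Raiz n) from rfl]
      by_cases h1 : a = i
      · subst h1
        split_ifs <;> first | ring | simp_all
      · simp only [if_neg h1]
        split_ifs <;> ring
    · -- M < (l:ℕ)
      have e2 : ((l - M : ℕ+) : ℕ) = (l : ℕ) - (M : ℕ) := pnat_sub_coe hlt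
      have hbege : Raiz.beg ((a, l - M) : Raiz n) = Raiz.beg ((a, l) : Raiz n) := by
        rw [beg_pair, beg_pair, e2, Nat.cast_sub (le_of_lt hlt), hM0, sub_zero]
      have hplus1 : (1 + l) - M = 1 + (l - M) := PNat.coe_injective (by
        rw [pnat_sub_coe (a := 1 + l) (b := M) (by omega), e1l, PNat.add_coe,
          PNat.one_coe, e2]; omega)
      have hplus2 : (l + 1) - M = (l - M) + 1 := PNat.coe_injective (by
        rw [pnat_sub_coe (a := l + 1) (b := M) (by omega), el1, PNat.add_coe,
          PNat.one_coe, e2]; omega)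
      rw [CpFun_eval_lt (l := 1 + l) (show (M : ℕ) < ((1 + l : ℕ+) : ℕ) by omega),
        CpFun_eval_lt (l := l + 1) (show (M : ℕ) < ((l + 1 : ℕ+) : ℕ) by omega),
        CpFun_eval_lt (l := l) hlt,
        diffOp_X, FFun_eval, hbege, hplus1, hplus2]

end KeyF

/-- For every `p ≥ 1` and every `i ∈ ℤ/nℤ`, the operator `a_p` commutes with the
Chevalley operators: `[a_p, e_i^T] = 0` and `[a_p, f_i^T] = 0`. -/
theorem aPos_commutes_with_chevalley {n : ℕ} (hn : 2 ≤ n) (c : ZMod n → ℚ)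
    (p : ℕ) (hp : 1 ≤ p) (i : ZMod n) :
    brak (aPos n p) (eT i) = 0 ∧ brak (aPos n p) (fT c i) = 0 := by
  haveI : NeZero n := ⟨by omega⟩
  have hpn : 0 < p * n := Nat.mul_pos (by omega) (by omega)
  have hM0 : (((⟨p * n, hpn⟩ : ℕ+) : ℕ) : ZMod n) = 0 := by
    show ((p * n : ℕ) : ZMod n) = 0
    push_cast
    rw [ZMod.natCast_self, mul_zero]
  have hM2 : 2 ≤ ((⟨p * n, hpn⟩ : ℕ+) : ℕ) := by
    show 2 ≤ p * n
    calc 2 = 1 * 2 := by omega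
      _ ≤ p * n := Nat.mul_le_mul hp hn
  have hA : aPos n p = diffOp (CpFun (⟨p * n, hpn⟩ : ℕ+) : Raiz n → Pol n) :=
    aPos_eq_diffOp p hpn
  constructor
  · funext P
    simp only [brak, Pi.zero_apply]
    rw [hA, eT_eq]
    rw [diffOp_comm _ _ (key_e (⟨p * n, hpn⟩ : ℕ+) hM0 hM2 i) P, sub_self]
  · funext P
    simp only [brak, Pi.zero_apply]
    rw [hA]
    simp only [fT_eq]
    rw [diffOp_add, diffOp_smul, diffOp_mul, diffOp_X,
      CpFun_simple hM2, zero_mul, zero_add,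
      diffOp_comm _ _ (key_f (⟨p * n, hpn⟩ : ℕ+) hM0 hM2 i) P]
    ring
end
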